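/- arXiv:1808.05295 — 2 statements merged into one kernel-verified Lean document; each statement's English description precedes it below -/
import Mathlib

section
/- Let B < 0 and C, z, K ∈ ℝ with K > 0 and z = (C − ln K)/B. For ξ ∈ ℂ with Im ξ > −B, the Fourier transform of the call payoff satisfies ∫_ℝ e^{−irξ}(e^{Br + C} − K)₊ dr = K·B·e^{izξ}/(ξ(ξ + iB)). -/
open Complex Real MeasureTheory Set Filter Topology

lemma aux_integrableOn_exp_mul_Iic {a : ℝ} (ha : 0 < a) (t : ℝ) :
    IntegrableOn (fun x : ℝ => Real.exp (a * x)) (Iic t) := by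
  have h := exp_neg_integrableOn_Ioi (-t) ha
  rw [← (Measure.measurePreserving_neg (volume : Measure ℝ)).integrableOn_comp_preimage
      (Homeomorph.neg ℝ).measurableEmbedding] at h
  have heq : (fun x : ℝ => Real.exp (a * x)) = (fun x : ℝ => Real.exp (-a * x)) ∘ Neg.neg := by
    funext x; simp [Function.comp]
  have hpre : (Neg.neg : ℝ → ℝ) ⁻¹' Ioi (-t) = Iio t := by
    ext x; simp
  rw [hpre] at h
  rw [heq, integrableOn_Iic_iff_integrableOn_Iio]
  exact h

lemma aux_integrableOn_cexp_Iic {c : ℂ} (hc : 0 < c.re) (t : ℝ) :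
    IntegrableOn (fun x : ℝ => Complex.exp (c * x)) (Iic t) := by
  refine (aux_integrableOn_exp_mul_Iic hc t).mono' ?_ ?_
  · exact (Complex.continuous_exp.comp (continuous_const.mul Complex.continuous_ofReal)).aestronglyMeasurable.restrict
  · filter_upwards with x
    simp [Complex.norm_exp]

lemma aux_integral_cexp_Iic {c : ℂ} (hc : 0 < c.re) (t : ℝ) :
    ∫ x : ℝ in Iic t, Complex.exp (c * x) = Complex.exp (c * t) / c := by
  have hc0 : c ≠ 0 := fun h => by simp [h] at hc
  have D : ∀ x : ℝ, HasDerivAt (fun y : ℝ => Complex.exp (c * y) / c) (Complex.exp (c * x)) x := by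
    intro x
    rw [← mul_div_cancel_right₀ (Complex.exp (c * x)) hc0]
    apply ((Complex.hasDerivAt_exp _).comp x _).div_const c
    simpa only [mul_one, id_eq] using ((hasDerivAt_id (x : ℂ)).const_mul _).comp_ofReal
  have htend : Tendsto (fun x : ℝ => Complex.exp (c * x) / c) atBot (𝓝 0) := by
    have h1 : Tendsto (fun x : ℝ => Complex.exp (c * x)) atBot (𝓝 0) := by
      rw [tendsto_zero_iff_norm_tendsto_zero]
      have : ∀ x : ℝ, ‖Complex.exp (c * x)‖ = Real.exp (c.re * x) := by
        intro x; simp [Complex.norm_exp]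
      simp_rw [this]
      exact (Real.tendsto_exp_atBot).comp
        (tendsto_const_mul_atBot_of_pos hc |>.mpr tendsto_id)
    simpa using h1.div_const c
  have := integral_Iic_of_hasDerivAt_of_tendsto' (a := t)
    (fun x _ => D x) (aux_integrableOn_cexp_Iic hc t) htend
  simpa using this

theorem stmt_12 (B C K : ℝ) (hB : B < 0) (hK : 0 < K) (ξ : ℂ) (hξ : -B < ξ.im) :
    (∫ r : ℝ, Complex.exp (-Complex.I * r * ξ) *
        ((max (Real.exp (B * r + C) - K) 0 : ℝ) : ℂ))
      = (K : ℂ) * (B : ℂ) *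
          Complex.exp (Complex.I * (((C - Real.log K) / B : ℝ) : ℂ) * ξ) /
          (ξ * (ξ + Complex.I * B)) := by
  set t : ℝ := (Real.log K - C) / B with ht
  have hBt : B * t + C = Real.log K := by
    rw [ht]; field_simp [hB.ne]; ring
  -- constants
  set c₁ : ℂ := (B : ℂ) - Complex.I * ξ with hc₁
  set c₂ : ℂ := -Complex.I * ξ with hc₂
  have hc₁re : 0 < c₁.re := by
    simp [hc₁, Complex.mul_re]
    linarith
  have hc₂re : 0 < c₂.re := by
    simp [hc₂, Complex.mul_re]
    linarith
  -- rewrite integrand as indicator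
  have key : (fun r : ℝ => Complex.exp (-Complex.I * r * ξ) *
        ((max (Real.exp (B * r + C) - K) 0 : ℝ) : ℂ))
      = Set.indicator (Iic t)
        (fun r : ℝ => Real.exp C * Complex.exp (c₁ * r) - (K : ℂ) * Complex.exp (c₂ * r)) := by
    funext r
    by_cases hr : r ≤ t
    · rw [Set.indicator_of_mem (mem_Iic.mpr hr)]
      have h1 : Real.log K ≤ B * r + C := by nlinarith [(mul_le_mul_of_nonpos_left hr hB.le)]
      have h2 : K ≤ Real.exp (B * r + C) := by
        rw [← Real.exp_log hK]; exact Real.exp_le_exp.2 h1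
      rw [max_eq_left (by linarith)]
      push_cast
      rw [mul_sub]
      congr 1
      · rw [← Complex.exp_add, ← Complex.exp_add]
        congr 1
        rw [hc₁]; push_cast; ring
      · rw [show (-Complex.I * (r : ℂ) * ξ) = c₂ * r by rw [hc₂]; ring, mul_comm]
    · rw [Set.indicator_of_notMem (by simpa using hr)]
      have h1 : B * r + C < Real.log K := by
        push_neg at hr; nlinarith [(mul_lt_mul_of_neg_left hr hB)]
      have h2 : Real.exp (B * r + C) < K := by
        rw [← Real.exp_log hK]; exact Real.exp_lt_exp.2 h1
      rw [max_eq_right (by linarith)]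
      simp
  rw [key, integral_indicator measurableSet_Iic]
  have hInt1 : IntegrableOn (fun r : ℝ => Real.exp C * Complex.exp (c₁ * r)) (Iic t) :=
    (aux_integrableOn_cexp_Iic hc₁re t).const_mul _
  have hInt2 : IntegrableOn (fun r : ℝ => (K : ℂ) * Complex.exp (c₂ * r)) (Iic t) :=
    (aux_integrableOn_cexp_Iic hc₂re t).const_mul _
  rw [MeasureTheory.integral_sub hInt1 hInt2, MeasureTheory.integral_const_mul,
    MeasureTheory.integral_const_mul, aux_integral_cexp_Iic hc₁re t,
    aux_integral_cexp_Iic hc₂re t]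
  -- now algebra
  have hz : ((C - Real.log K) / B : ℝ) = -t := by
    rw [ht]; ring
  have hexp1 : (Real.exp C : ℂ) * Complex.exp (c₁ * t)
      = (K : ℂ) * Complex.exp (Complex.I * (((C - Real.log K) / B : ℝ) : ℂ) * ξ) := by
    rw [hz]
    have h1 : (Real.exp C : ℂ) * Complex.exp (c₁ * t)
        = (Real.exp (B * t + C) : ℂ) * Complex.exp (-Complex.I * t * ξ) := by
      rw [Complex.ofReal_exp, Complex.ofReal_exp, ← Complex.exp_add, ← Complex.exp_add, hc₁]
      push_cast
      ring_nf
    rw [h1, hBt, Real.exp_log hK]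
    congr 1
    push_cast
    ring
  have hexp2 : Complex.exp (c₂ * t)
      = Complex.exp (Complex.I * (((C - Real.log K) / B : ℝ) : ℂ) * ξ) := by
    rw [hz]
    congr 1
    rw [hc₂]; push_cast; ring
  rw [hexp2]
  have hξ0 : ξ ≠ 0 := by
    intro h; rw [h] at hξ; simp at hξ; linarith
  have hc₂0 : c₂ ≠ 0 := fun h => by simp [h] at hc₂re
  have hc₁0 : c₁ ≠ 0 := fun h => by simp [h] at hc₁re
  have hsum : ξ + Complex.I * B ≠ 0 := by
    intro h
    have : (ξ + Complex.I * B).im = 0 := by rw [h]; simp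
    simp [Complex.add_im, Complex.mul_im] at this
    linarith
  rw [← mul_div_assoc, hexp1]
  have h1 : (B : ℂ) - Complex.I * ξ ≠ 0 := hc₁ ▸ hc₁0
  have h2 : -Complex.I * ξ ≠ 0 := hc₂ ▸ hc₂0
  rw [hc₁, hc₂]
  field_simp
  ring_nf
  rw [Complex.I_sq]
  ring
end

section
/- Let d > 0 and suppose f is analytic on the strip S_{(−d,d)} and satisfies |f(y + ia)| ≤ M·exp(−c·e^{|y|}) for all y ∈ ℝ, a ∈ (−d, d), with constants M, c > 0. Then the Hardy norm H(f, d') = ∫_ℝ |f(y − id')| dy + ∫_ℝ |f(y + id')| dy is finite for every d' ∈ (0, d), and the tail sum ζ Σ_{|j| > N} |f(jζ)| is at most (2M/c)·exp(−c·e^{Nζ}) for any ζ > 0, N ≥ 1. -/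
open Complex Real MeasureTheory

set_option maxHeartbeats 1000000 in
theorem stmt_18 (d M c : ℝ) (hd : 0 < d) (hM : 0 < M) (hc : 0 < c) (f : ℂ → ℂ)
    (hana : AnalyticOn ℂ f {z : ℂ | |z.im| < d})
    (hbound : ∀ y a : ℝ, |a| < d →
      ‖f ((y : ℂ) + (a : ℂ) * Complex.I)‖ ≤ M * Real.exp (-c * Real.exp |y|)) :
    (∀ d' : ℝ, d' ∈ Set.Ioo 0 d →
      MeasureTheory.Integrable
        (fun y : ℝ => ‖f ((y : ℂ) - (d' : ℂ) * Complex.I)‖) ∧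
      MeasureTheory.Integrable
        (fun y : ℝ => ‖f ((y : ℂ) + (d' : ℂ) * Complex.I)‖)) ∧
    (∀ ζ : ℝ, 0 < ζ → ∀ N : ℕ, 1 ≤ N →
      ζ * ∑' j : {j : ℤ // (N : ℤ) < |j|}, ‖f (((j : ℤ) : ℂ) * (ζ : ℂ))‖
        ≤ (2 * M / c) * Real.exp (-c * Real.exp (N * ζ))) := by
  have hint : ∀ a : ℝ, |a| < d →
      MeasureTheory.Integrable (fun y : ℝ => ‖f ((y : ℂ) + (a : ℂ) * Complex.I)‖) := by

    intro a ha
    have hcont : Continuous fun y : ℝ => f ((y : ℂ) + (a : ℂ) * Complex.I) := by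
      apply hana.continuousOn.comp_continuous (by continuity)
      intro y
      simp only [Set.mem_setOf_eq, Complex.add_im, Complex.ofReal_im, Complex.mul_im,
        Complex.ofReal_re, Complex.I_im, Complex.I_re, mul_one, mul_zero, add_zero, zero_add]
      simpa using ha
    have hgauss : Integrable (fun y : ℝ => M * Real.exp (-c) * Real.exp (-(c/4) * y ^ 2)) :=
      (integrable_exp_neg_mul_sq (by positivity)).const_mul _
    refine hgauss.mono (hcont.norm.aestronglyMeasurable) (Filter.Eventually.of_forall fun y => ?_)
    have h1 := hbound y a ha
    have h2 : Real.exp (-c * Real.exp |y|) ≤ Real.exp (-c) * Real.exp (-(c/4) * y ^ 2) := by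
      rw [← Real.exp_add, Real.exp_le_exp]
      have h3 : 1 + |y| / 2 ≤ Real.exp (|y| / 2) := by
        have := Real.add_one_le_exp (|y| / 2); linarith
      have h4 : Real.exp |y| = Real.exp (|y|/2) ^ 2 := by
        rw [← Real.exp_nat_mul]; ring_nf
      have h5 : 1 + y ^ 2 / 4 ≤ Real.exp |y| := by
        rw [h4]
        have h6 : (1 + |y|/2) ^ 2 ≤ Real.exp (|y|/2) ^ 2 := by
          apply pow_le_pow_left₀ (by positivity) h3
        have : |y| ^ 2 = y ^ 2 := sq_abs y
        nlinarith [abs_nonneg y]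
      nlinarith
    calc ‖‖f ((y : ℂ) + (a : ℂ) * Complex.I)‖‖
        = ‖f ((y : ℂ) + (a : ℂ) * Complex.I)‖ := by
          rw [Real.norm_eq_abs, _root_.abs_of_nonneg (norm_nonneg _)]
      _ ≤ M * Real.exp (-c * Real.exp |y|) := h1
      _ ≤ M * (Real.exp (-c) * Real.exp (-(c/4) * y ^ 2)) := by
          exact mul_le_mul_of_nonneg_left h2 hM.le
      _ = ‖M * Real.exp (-c) * Real.exp (-(c/4) * y ^ 2)‖ := by
          rw [Real.norm_eq_abs, _root_.abs_of_nonneg (by positivity)]; ring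
  constructor
  · intro d' hd'
    obtain ⟨hd'0, hd'd⟩ := hd'
    constructor
    · have h := hint (-d') (by rw [abs_neg, _root_.abs_of_pos hd'0]; exact hd'd)
      have heq : (fun y : ℝ => ‖f ((y : ℂ) - (d' : ℂ) * Complex.I)‖)
          = fun y : ℝ => ‖f ((y : ℂ) + ((-d' : ℝ) : ℂ) * Complex.I)‖ := by
        funext y
        congr 2
        push_cast
        ring
      rw [heq]
      exact h
    · exact hint d' (by rw [_root_.abs_of_pos hd'0]; exact hd'd)
  intro ζ hζ N hN
  set E : ℝ := Real.exp (-c * Real.exp (N * ζ)) with hE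
  set r : ℝ := Real.exp (-(c * ζ * Real.exp (N * ζ))) with hr
  set A : ℝ := M * E with hA
  have hE0 : 0 < E := Real.exp_pos _
  have hA0 : 0 < A := by positivity
  have hr0 : 0 < r := Real.exp_pos _
  have hr1 : r < 1 := by
    rw [hr, Real.exp_lt_one_iff]
    have : 0 < c * ζ * Real.exp (N * ζ) := by positivity
    linarith
  set g : ℤ → ℝ := fun j => if (N : ℤ) < |j| then A * r ^ (|j| - N).toNat else 0 with hg
  have hg0 : ∀ j, 0 ≤ g j := by
    intro j; rw [hg]; dsimp only; split
    · positivity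
    · exact le_refl 0
  -- value of g at shifted indices
  have hgval : ∀ j : ℤ, (N : ℤ) < |j| → g j = A * r ^ (|j| - N).toNat := by
    intro j hj; rw [hg]; simp [hj]
  -- key term bound
  have key : ∀ j : ℤ, (N : ℤ) < |j| → ‖f ((j : ℂ) * (ζ : ℂ))‖ ≤ g j := by
    intro j hj
    have hbd := hbound ((j : ℝ) * ζ) 0 (by simpa using hd)
    have heq : (Complex.ofReal ((j : ℝ) * ζ)) + ((0 : ℝ) : ℂ) * Complex.I = (j : ℂ) * (ζ : ℂ) := by
      push_cast; ring
    rw [heq] at hbd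
    set m : ℕ := (|j| - N).toNat with hm
    have hm1 : 1 ≤ m := by rw [hm]; omega
    have hjm : (|j| : ℤ) = (N : ℤ) + m := by rw [hm]; omega
    have habs : |(j : ℝ) * ζ| = ((N : ℝ) + m) * ζ := by
      rw [abs_mul, abs_of_pos hζ]
      congr 1
      rw [← Int.cast_abs, hjm]
      push_cast; ring
    rw [hgval j hj, ← hm, hA, mul_assoc]
    refine le_trans hbd ?_
    apply mul_le_mul_of_nonneg_left _ hM.le
    rw [habs, hE, hr, ← Real.exp_nat_mul, ← Real.exp_add, Real.exp_le_exp]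
    have h1 : 1 + m * ζ ≤ Real.exp (m * ζ) := by
      have := Real.add_one_le_exp ((m : ℝ) * ζ); linarith
    have h2 : Real.exp (((N : ℝ) + m) * ζ) = Real.exp (N * ζ) * Real.exp (m * ζ) := by
      rw [← Real.exp_add]; ring_nf
    have h3 : (0 : ℝ) < Real.exp (N * ζ) := Real.exp_pos _
    rw [h2]
    have hmζ : (0:ℝ) ≤ (m : ℝ) * ζ := by positivity
    nlinarith [mul_le_mul_of_nonneg_left h1 (show (0:ℝ) ≤ c * Real.exp ((N:ℝ) * ζ) by positivity)]
  -- summability of the two halves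
  have hgeo : Summable (fun n : ℕ => (A * r) * r ^ n) :=
    (summable_geometric_of_lt_one hr0.le hr1).mul_left _
  have hs1 : Summable (fun n : ℕ => g ((n : ℤ))) := by
    rw [← summable_nat_add_iff (N + 1)]
    apply hgeo.congr
    intro n
    have h : ((N : ℤ)) < |((n + (N + 1) : ℕ) : ℤ)| := by
      rw [_root_.abs_of_nonneg (by positivity)]; push_cast; omega
    rw [hgval _ h, _root_.abs_of_nonneg (by positivity : (0:ℤ) ≤ ((n + (N + 1) : ℕ) : ℤ))]
    have : ((((n + (N + 1) : ℕ)) : ℤ) - N).toNat = n + 1 := by push_cast; omega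
    rw [this]; ring
  have hs2 : Summable (fun n : ℕ => g (-((n : ℤ) + 1))) := by
    rw [← summable_nat_add_iff N]
    apply hgeo.congr
    intro n
    have h : ((N : ℤ)) < |(-(((n + N : ℕ) : ℤ) + 1))| := by
      rw [abs_neg, _root_.abs_of_nonneg (by positivity)]; push_cast; omega
    rw [hgval _ h]
    have : (|(-(((n + N : ℕ) : ℤ) + 1))| - N).toNat = n + 1 := by
      rw [abs_neg, _root_.abs_of_nonneg (by positivity)]; push_cast; omega
    rw [this]; ring
  have hgsum : Summable g := Summable.of_nat_of_neg_add_one hs1 hs2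
  -- tsum of g
  have htg : ∑' j : ℤ, g j ≤ 2 * (A * r * (1 - r)⁻¹) := by
    rw [tsum_of_nat_of_neg_add_one hs1 hs2]
    have hhalf : ∀ (h : Summable (fun n : ℕ => (A*r) * r ^ n)), (∑' n : ℕ, (A*r) * r ^ n) = A * r * (1 - r)⁻¹ := by
      intro _
      rw [tsum_mul_left, tsum_geometric_of_lt_one hr0.le hr1]
    have e1 : (∑' n : ℕ, g ((n : ℤ))) = A * r * (1 - r)⁻¹ := by
      rw [← Summable.sum_add_tsum_nat_add (N + 1) hs1]
      have z1 : (∑ i ∈ Finset.range (N + 1), g ((i : ℤ))) = 0 := by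
        apply Finset.sum_eq_zero
        intro i hi
        rw [hg]; dsimp only
        rw [if_neg]
        rw [_root_.abs_of_nonneg (by positivity : (0:ℤ) ≤ (i:ℤ))]
        simp only [Finset.mem_range] at hi
        push_cast; omega
      rw [z1, zero_add]
      rw [← hhalf hgeo]
      apply tsum_congr
      intro n
      have h : ((N : ℤ)) < |((n + (N + 1) : ℕ) : ℤ)| := by
        rw [_root_.abs_of_nonneg (by positivity)]; push_cast; omega
      rw [hgval _ h, _root_.abs_of_nonneg (by positivity : (0:ℤ) ≤ ((n + (N + 1) : ℕ) : ℤ))]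
      have : ((((n + (N + 1) : ℕ)) : ℤ) - N).toNat = n + 1 := by push_cast; omega
      rw [this]; ring
    have e2 : (∑' n : ℕ, g (-((n : ℤ) + 1))) = A * r * (1 - r)⁻¹ := by
      rw [← Summable.sum_add_tsum_nat_add N hs2]
      have z2 : (∑ i ∈ Finset.range N, g (-((i : ℤ) + 1))) = 0 := by
        apply Finset.sum_eq_zero
        intro i hi
        rw [hg]; dsimp only
        rw [if_neg]
        rw [abs_neg, _root_.abs_of_nonneg (by positivity)]
        simp only [Finset.mem_range] at hi
        push_cast; omega
      rw [z2, zero_add]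
      rw [← hhalf hgeo]
      apply tsum_congr
      intro n
      have h : ((N : ℤ)) < |(-(((n + N : ℕ) : ℤ) + 1))| := by
        rw [abs_neg, _root_.abs_of_nonneg (by positivity)]; push_cast; omega
      rw [hgval _ h]
      have : (|(-(((n + N : ℕ) : ℤ) + 1))| - N).toNat = n + 1 := by
        rw [abs_neg, _root_.abs_of_nonneg (by positivity)]; push_cast; omega
      rw [this]; ring
    rw [e1, e2]; linarith
  -- compare subtype tsum with tsum of g
  have hsub : Summable (fun j : {j : ℤ // (N : ℤ) < |j|} => ‖f (((j : ℤ) : ℂ) * (ζ : ℂ))‖) := by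
    have hgs : Summable (fun j : {j : ℤ // (N : ℤ) < |j|} => g j.1) := hgsum.subtype _
    exact Summable.of_nonneg_of_le (fun j => norm_nonneg _) (fun j => key j.1 j.2) hgs
  have hcomp : (∑' j : {j : ℤ // (N : ℤ) < |j|}, ‖f (((j : ℤ) : ℂ) * (ζ : ℂ))‖) ≤ ∑' j : ℤ, g j := by
    exact Summable.tsum_le_tsum_of_inj (fun j => j.1) Subtype.val_injective
      (fun c _ => hg0 c) (fun j => key j.1 j.2) hsub hgsum
  -- final arithmetic
  have h1r : 0 < 1 - r := by linarith
  have hfin : c * ζ * r ≤ 1 - r := by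
    have ht : c * ζ ≤ c * ζ * Real.exp (N * ζ) := by
      have h1 : (1:ℝ) ≤ Real.exp (N * ζ) := Real.one_le_exp (by positivity)
      nlinarith [mul_le_mul_of_nonneg_left h1 (mul_pos hc hζ).le]
    have h2 : c * ζ * Real.exp (N * ζ) + 1 ≤ Real.exp (c * ζ * Real.exp (N * ζ)) :=
      Real.add_one_le_exp _
    have h3 : r * Real.exp (c * ζ * Real.exp (N * ζ)) = 1 := by
      rw [hr, ← Real.exp_add]; simp
    nlinarith [hr0]
  calc ζ * (∑' j : {j : ℤ // (N : ℤ) < |j|}, ‖f (((j : ℤ) : ℂ) * (ζ : ℂ))‖)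
      ≤ ζ * (2 * (A * r * (1 - r)⁻¹)) := by
        apply mul_le_mul_of_nonneg_left (le_trans hcomp htg) hζ.le
    _ = (ζ * r) * (2 * A * (1 - r)⁻¹) := by ring
    _ ≤ ((1 - r) / c) * (2 * A * (1 - r)⁻¹) := by
        apply mul_le_mul_of_nonneg_right _ (by positivity)
        rw [le_div_iff₀ hc]; nlinarith
    _ = (2 * A / c) * ((1 - r) * (1 - r)⁻¹) := by ring
    _ = 2 * M / c * E := by
        rw [mul_inv_cancel₀ (ne_of_gt h1r), hA]; ring
end
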